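/- Let d ≥ 1 and let (B_n) be an increasing sequence (B_n ⊆ B_{n+1}) of compact convex subsets of ℝ^d such that for each n there is a closed ball of radius ρ_n contained in B_n, with ρ_n → ∞ as n → ∞. Then for every r > 0, vol({x ∈ B_n : dist(x, ∂B_n) ≤ r}) / vol(B_n) → 0 as n → ∞, where vol denotes Lebesgue measure and ∂B_n the topological boundary of B_n. -/

import Mathlib

open MeasureTheory Filter Metric Set
open scoped ENNReal

private lemma homothety_ball_subset' {d : ℕ} {B : Set (EuclideanSpace ℝ (Fin d))}
    (hB : Convex ℝ B)
    {c : EuclideanSpace ℝ (Fin d)} {ρ r : ℝ} (hball : Metric.closedBall c ρ ⊆ B)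
    (hr : 0 < r) (hρ : 2 * r < ρ) {x : EuclideanSpace ℝ (Fin d)} (hx : x ∈ B) :
    Metric.closedBall (AffineMap.homothety c (1 - 2*r/ρ) x) (2*r) ⊆ B := by
  intro y hy
  have hρ0 : 0 < ρ := lt_trans (by linarith) hρ
  set s : ℝ := 2*r/ρ with hs
  have hs0 : 0 < s := div_pos (by linarith) hρ0
  have hs1 : s < 1 := (div_lt_one hρ0).2 hρ
  set x' : EuclideanSpace ℝ (Fin d) := AffineMap.homothety c (1 - s) x with hx'
  set z : EuclideanSpace ℝ (Fin d) := c + s⁻¹ • (y - x') with hz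
  have hzc : z ∈ Metric.closedBall c ρ := by
    rw [Metric.mem_closedBall, dist_eq_norm]
    have : z - c = s⁻¹ • (y - x') := by rw [hz]; abel
    rw [this, norm_smul, norm_inv, Real.norm_eq_abs, abs_of_pos hs0]
    have hyx : ‖y - x'‖ ≤ 2*r := by
      rw [← dist_eq_norm]; exact Metric.mem_closedBall.1 hy
    rw [inv_mul_le_iff₀ hs0]
    calc ‖y - x'‖ ≤ 2*r := hyx
      _ = s * ρ := by rw [hs, div_mul_cancel₀ _ hρ0.ne']
  have hzB : z ∈ B := hball hzc
  have key : y = (1 - s) • x + s • z := by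
    have hx'eq : x' = (1 - s) • (x - c) + c := by
      rw [hx', AffineMap.homothety_apply]; rfl
    rw [hz, smul_add, smul_smul, mul_inv_cancel₀ hs0.ne', one_smul, hx'eq]
    module
  rw [key]
  exact hB hx hzB (by linarith) (le_of_lt hs0) (by ring)

/-- Amenability of Euclidean space: for an increasing sequence of compact convex sets whose
inradii tend to infinity, the relative volume of the inner boundary layer of any fixed width
`r > 0` tends to zero. -/
theorem boundary_layer_volume_ratio_tendsto_zero (d : ℕ) (hd : 1 ≤ d)
    (B : ℕ → Set (EuclideanSpace ℝ (Fin d)))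
    (hcomp : ∀ n, IsCompact (B n)) (hconv : ∀ n, Convex ℝ (B n))
    (hmono : ∀ n, B n ⊆ B (n + 1))
    (ρ : ℕ → ℝ) (c : ℕ → EuclideanSpace ℝ (Fin d))
    (hball : ∀ n, Metric.closedBall (c n) (ρ n) ⊆ B n)
    (hρ : Tendsto ρ atTop atTop) :
    ∀ r : ℝ, 0 < r →
      Tendsto
        (fun n => volume {x ∈ B n | Metric.infDist x (frontier (B n)) ≤ r} / volume (B n))
        atTop (nhds (0 : ℝ≥0∞)) := by
  intro r hr
  haveI : Nonempty (Fin d) := ⟨⟨0, hd⟩⟩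
  -- the space is noncompact
  haveI : Nontrivial (EuclideanSpace ℝ (Fin d)) := inferInstance
  -- the real sequence 2r/ρ n tends to 0
  have hs0 : Tendsto (fun n => 2*r / ρ n) atTop (nhds 0) := by
    have := hρ.inv_tendsto_atTop
    have h2 := this.const_mul (2*r)
    simpa [div_eq_mul_inv] using h2
  -- upper bound sequence
  set f : ℕ → ℝ≥0∞ := fun n => ENNReal.ofReal (1 - (1 - 2*r/ρ n)^d) with hf
  have hftend : Tendsto f atTop (nhds 0) := by
    have hreal : Tendsto (fun n => 1 - (1 - 2*r/ρ n)^d) atTop (nhds 0) := by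
      have h1 : Tendsto (fun n => (1 - 2*r/ρ n)^d) atTop (nhds ((1 - (0:ℝ))^d)) :=
        (tendsto_const_nhds.sub hs0).pow d
      have h2 : Tendsto (fun n => (1:ℝ) - (1 - 2*r/ρ n)^d) atTop (nhds (1 - (1 - (0:ℝ))^d)) :=
        tendsto_const_nhds.sub h1
      simpa using h2
    have := (ENNReal.continuous_ofReal.tendsto 0).comp hreal
    simpa [hf, Function.comp_def] using this
  apply tendsto_of_tendsto_of_tendsto_of_le_of_le' tendsto_const_nhds hftend
  · exact Eventually.of_forall fun n => zero_le
  -- the key bound, eventually in n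
  filter_upwards [hρ.eventually_gt_atTop (2*r)] with n hn
  have hρ0 : 0 < ρ n := lt_trans (by linarith) hn
  set lam : ℝ := 1 - 2*r/ρ n with hlam
  have hlam0 : 0 < lam := by
    have : 2*r/ρ n < 1 := (div_lt_one hρ0).2 hn
    simp [hlam]; linarith
  have hlam1 : lam ≤ 1 := by
    have : 0 < 2*r/ρ n := div_pos (by linarith) hρ0
    simp [hlam]; linarith
  set L : Set (EuclideanSpace ℝ (Fin d)) :=
    {x ∈ B n | Metric.infDist x (frontier (B n)) ≤ r} with hL
  set T : Set (EuclideanSpace ℝ (Fin d)) :=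
    AffineMap.homothety (c n) lam '' B n with hT
  -- frontier of B n is nonempty and compact
  have hBne : (B n).Nonempty := by
    refine Set.Nonempty.mono (hball n) ?_
    exact ⟨c n, Metric.mem_closedBall_self hρ0.le⟩
  have hfne : (frontier (B n)).Nonempty := by
    rw [nonempty_frontier_iff]
    exact ⟨hBne, (hcomp n).ne_univ⟩
  have hfcomp : IsCompact (frontier (B n)) :=
    (hcomp n).of_isClosed_subset isClosed_frontier
      ((frontier_subset_closure).trans_eq (hcomp n).isClosed.closure_eq)
  -- T ⊆ B n and T is disjoint from L
  have hTB : T ⊆ B n := by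
    rintro _ ⟨x, hx, rfl⟩
    exact homothety_ball_subset' (hconv n) (hball n) hr hn hx
      (Metric.mem_closedBall_self (by linarith))
  have hdisj : Disjoint T L := by
    rw [Set.disjoint_left]
    rintro _ ⟨x, hx, rfl⟩ hmem
    have hsub := homothety_ball_subset' (hconv n) (hball n) hr hn hx
    set x' := AffineMap.homothety (c n) lam x with hx'
    have hint : Metric.ball x' (2*r) ⊆ interior (B n) :=
      interior_maximal ((Metric.ball_subset_closedBall).trans hsub) Metric.isOpen_ball
    obtain ⟨y, hy, hyd⟩ := hfcomp.exists_infDist_eq_dist hfne x'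
    have hle : Metric.infDist x' (frontier (B n)) ≤ r := hmem.2
    have : y ∈ Metric.ball x' (2*r) := by
      rw [Metric.mem_ball, dist_comm]
      calc dist x' y = Metric.infDist x' (frontier (B n)) := hyd.symm
        _ ≤ r := hle
        _ < 2*r := by linarith
    exact (hy.2 : y ∉ interior (B n)) (hint this)
  -- measurability
  have hLmeas : MeasurableSet L := by
    have : IsClosed L := by
      rw [hL]
      exact ((hcomp n).isClosed).inter
        (isClosed_le (continuous_infDist_pt _) continuous_const)
    exact this.measurableSet
  -- volume computation
  set V := volume (B n) with hV
  have hVfin : V ≠ ⊤ := ((hcomp n).measure_lt_top).ne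
  have hTvol : volume T = ENNReal.ofReal (lam^d) * V := by
    rw [hT, Measure.addHaar_image_homothety, finrank_euclideanSpace_fin,
      abs_of_nonneg (pow_nonneg hlam0.le d)]
  have hsum : ENNReal.ofReal (lam^d) * V + volume L ≤ V := by
    rw [← hTvol, ← measure_union hdisj hLmeas]
    refine measure_mono (Set.union_subset hTB ?_)
    exact fun x hx => hx.1
  have hLle : volume L ≤ (1 - ENNReal.ofReal (lam^d)) * V := by
    have h1 : volume L ≤ V - ENNReal.ofReal (lam^d) * V := ENNReal.le_sub_of_add_le_left (by finiteness) hsum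
    have h2 : (1 - ENNReal.ofReal (lam^d)) * V = 1 * V - ENNReal.ofReal (lam^d) * V :=
      ENNReal.sub_mul (fun _ _ => hVfin)
    rw [h2, one_mul]; exact h1
  have hdiv : volume L / V ≤ 1 - ENNReal.ofReal (lam^d) :=
    ENNReal.div_le_of_le_mul hLle
  have hfeq : f n = 1 - ENNReal.ofReal (lam^d) := by
    rw [show f n = ENNReal.ofReal (1 - lam^d) from rfl,
      ENNReal.ofReal_sub _ (pow_nonneg hlam0.le d), ENNReal.ofReal_one]
  rw [hfeq]
  exact hdiv
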